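/- Let X, Y be bounded operators on a Banach space E. The derivative of the analytic map f(t) = e^{X + tY} is given by f'(t) = ∫_{0}^{1} e^{(1-s)(X+tY)} Y e^{s(X+tY)} ds, where the integral is a Bochner integral. -/

import Mathlib

open NormedSpace

section Aux

variable {𝔸 : Type*} [NormedRing 𝔸] [NormedAlgebra ℝ 𝔸] [CompleteSpace 𝔸]

theorem bch_aux (A B Z : 𝔸) (c : ℝ) (hBA : B - A = c • Z) :
    exp B - exp A =
      c • ∫ s in (0 : ℝ)..1, exp ((1 - s) • A) * Z * exp (s • B) := by
  have key : ∀ s : ℝ, HasDerivAt (fun s : ℝ => exp ((1 - s) • A) * exp (s • B))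
      (c • (exp ((1 - s) • A) * Z * exp (s • B))) s := by
    intro s
    have hu : HasDerivAt (fun s : ℝ => 1 - s) (-1) s := by
      simpa using (hasDerivAt_id s).const_sub 1
    have h1 : HasDerivAt (fun s : ℝ => exp ((1 - s) • A))
        (-(exp ((1 - s) • A) * A)) s := by
      have := HasDerivAt.scomp (g₁ := fun u : ℝ => exp (u • A)) s
        (hasDerivAt_exp_smul_const (𝕂 := ℝ) A (1 - s)) hu
      simpa [Function.comp_def] using this
    have h2 : HasDerivAt (fun s : ℝ => exp (s • B)) (B * exp (s • B)) s :=
      hasDerivAt_exp_smul_const' (𝕂 := ℝ) B s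
    have h := h1.mul h2
    convert h using 1
    · rfl
    calc c • (exp ((1 - s) • A) * Z * exp (s • B))
        = exp ((1 - s) • A) * (c • Z) * exp (s • B) := by
          rw [mul_smul_comm, smul_mul_assoc]
      _ = exp ((1 - s) • A) * (B - A) * exp (s • B) := by rw [hBA]
      _ = -(exp ((1 - s) • A) * A) * exp (s • B)
            + exp ((1 - s) • A) * (B * exp (s • B)) := by
          noncomm_ring
  have hcont : Continuous fun s : ℝ =>
      c • (exp ((1 - s) • A) * Z * exp (s • B)) := by
    apply Continuous.const_smul
    exact (((continuous_iff_continuousAt.2 fun x => (exp_analytic (𝕂 := ℝ) x).continuousAt).comp (by continuity)).mul continuous_const).mul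
      ((continuous_iff_continuousAt.2 fun x => (exp_analytic (𝕂 := ℝ) x).continuousAt).comp (by continuity))
  have ftc := intervalIntegral.integral_eq_sub_of_hasDerivAt
    (f := fun s : ℝ => exp ((1 - s) • A) * exp (s • B))
    (a := 0) (b := 1) (fun s _ => key s) (hcont.intervalIntegrable 0 1)
  rw [intervalIntegral.integral_smul] at ftc
  simpa [exp_zero] using ftc.symm

end Aux

/-- **Derivative of the operator exponential.**
For bounded operators `X, Y` on a Banach space `E`, the derivative of the analytic map
`f(t) = e^{X + tY}` is `f'(t) = ∫_{0}^{1} e^{(1-s)(X+tY)} Y e^{s(X+tY)} ds`,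
where the integral is a Bochner integral. -/
theorem bch_exp_derivative {E : Type*} [NormedAddCommGroup E] [NormedSpace ℝ E]
    [CompleteSpace E] (X Y : E →L[ℝ] E) (t : ℝ) :
    HasDerivAt (fun τ : ℝ => exp (X + τ • Y))
      (∫ s in (0 : ℝ)..1,
        exp ((1 - s) • (X + t • Y)) * Y * exp (s • (X + t • Y))) t := by
  set A := X + t • Y with hA
  set I : ℝ → (E →L[ℝ] E) := fun τ =>
    ∫ s in (0 : ℝ)..1, exp ((1 - s) • A) * Y * exp (s • (X + τ • Y)) with hI
  rw [hasDerivAt_iff_tendsto_slope]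
  have hIcont : Continuous I := by
    apply intervalIntegral.continuous_parametric_intervalIntegral_of_continuous'
      (f := fun τ s => exp ((1 - s) • A) * Y * exp (s • (X + τ • Y)))
    exact (((continuous_iff_continuousAt.2 fun x => (exp_analytic (𝕂 := ℝ) x).continuousAt).comp (by continuity)).mul continuous_const).mul
      ((continuous_iff_continuousAt.2 fun x => (exp_analytic (𝕂 := ℝ) x).continuousAt).comp (by continuity))
  have htend : Filter.Tendsto I (nhdsWithin t {t}ᶜ) (nhds (I t)) :=
    (hIcont.tendsto t).mono_left nhdsWithin_le_nhds
  refine htend.congr' ?_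
  filter_upwards [self_mem_nhdsWithin] with τ (hτ : τ ≠ t)
  have hBA : (X + τ • Y) - A = (τ - t) • Y := by
    rw [hA, sub_smul]; abel
  have h := bch_aux A (X + τ • Y) Y (τ - t) hBA
  rw [slope_def_module]
  show I τ = (τ - t)⁻¹ • (exp (X + τ • Y) - exp (X + t • Y))
  rw [← hA, h, smul_smul, inv_mul_cancel₀ (sub_ne_zero.mpr hτ), one_smul]
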